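/- Let R be a commutative ring, n ≥ 3 a natural number, and 𝔞 an ideal of R. Then the following four subgroups of SL(n,R) coincide: (i) the full congruence subgroup C(n,R,𝔞); (ii) {g ∈ SL(n,R) : for all x ∈ E(n,R), the commutator [g,x] lies in E(n,R,𝔞)}; (iii) {g ∈ SL(n,R) : for all x ∈ E(n,R), [g,x] ∈ C(n,R,𝔞)}; (iv) {g ∈ SL(n,R) : for all x ∈ SL(n,R), [g,x] ∈ C(n,R,𝔞)}. (Type A_{n−1} instance of the paper's Lemma 9, the coincidence of the possible definitions of the full congruence subgroup.) -/

import Mathlib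

open Matrix
open scoped commutatorElement

/-- `SL n R` : the special linear group of degree `n` over `R`,
the simply connected Chevalley group of type `A_{n-1}`. -/
abbrev SL (n : ℕ) (R : Type*) [CommRing R] := Matrix.SpecialLinearGroup (Fin n) R

/-- The elementary transvection `e_{ij}(a) = 1 + a·E_{ij}` as an element of `SL n R`. -/
def elemTransv {n : ℕ} {R : Type*} [CommRing R] (i j : Fin n) (h : i ≠ j) (a : R) :
    SL n R :=
  ⟨Matrix.transvection i j a, Matrix.det_transvection_of_ne i j h a⟩

/-- The set of elementary transvections with parameters in `S`. -/
def transvSet (n : ℕ) {R : Type*} [CommRing R] (S : Set R) : Set (SL n R) :=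
  { x | ∃ i j : Fin n, ∃ h : i ≠ j, ∃ a ∈ S, x = elemTransv i j h a }

/-- `E(n,S)` : the subgroup generated by elementary transvections with parameters in `S`. -/
def Esub (n : ℕ) {R : Type*} [CommRing R] (S : Set R) : Subgroup (SL n R) :=
  Subgroup.closure (transvSet n S)

/-- `E(n,T,S)` : the normal closure of `E(n,S)` in `E(n,T)`, i.e. the subgroup
generated by the conjugates of elementary generators of level `S` by elements
of `E(n,T)`. -/
def relESet (n : ℕ) {R : Type*} [CommRing R] (T S : Set R) : Subgroup (SL n R) :=
  Subgroup.closure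
    { x | ∃ g ∈ Esub n T, ∃ y ∈ transvSet n S, x = g * y * g⁻¹ }

/-- `E(n,R,I)` : the relative elementary subgroup, the normal closure of
`E(n,I)` in the absolute elementary subgroup `E(n,R)`. -/
def relE (n : ℕ) {R : Type*} [CommRing R] (I : Ideal R) : Subgroup (SL n R) :=
  relESet n (Set.univ : Set R) (I : Set R)

/-- The reduction homomorphism `SL(n,R) → SL(n,R/I)`. -/
def redMap (n : ℕ) {R : Type*} [CommRing R] (I : Ideal R) : SL n R →* SL n (R ⧸ I) :=
  Matrix.SpecialLinearGroup.map (Ideal.Quotient.mk I)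

/-- `SL(n,R,I)` : the principal congruence subgroup of level `I`. -/
def SLcong (n : ℕ) {R : Type*} [CommRing R] (I : Ideal R) : Subgroup (SL n R) :=
  (redMap n I).ker

/-- `C(n,R,I)` : the full congruence subgroup of level `I`. -/
def Ccong (n : ℕ) {R : Type*} [CommRing R] (I : Ideal R) : Subgroup (SL n R) :=
  Subgroup.comap (redMap n I) (Subgroup.center (SL n (R ⧸ I)))

----------------------------------------------------------------
-- Part 0 : generic algebra lemmas
----------------------------------------------------------------

section Generic
variable {A : Type*} [Ring A]

/-- generic commutator expansion under nilpotency relations -/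
theorem genComm (a b : A) (haa : a * a = 0) (hbb : b * b = 0) (hba : b * a = 0) :
    (1 + a) * (1 + b) * (1 - a) * (1 - b) = 1 + a * b := by
  have hca : a * b * a = 0 := by rw [mul_assoc, hba, mul_zero]
  have c1 : (1 + a) * (1 + b) = 1 + a + b + a * b := by noncomm_ring
  have c2 : (1 + a + b + a * b) * (1 - a) =
      1 + b + a * b - a * a - b * a - a * b * a := by noncomm_ring
  have c3 : (1 + b + a * b) * (1 - b) = 1 + a * b - b * b - a * b * b := by noncomm_ring
  have hcb : a * b * b = 0 := by rw [mul_assoc, hbb, mul_zero]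
  rw [c1, c2, haa, hba, hca, sub_zero, sub_zero, sub_zero, c3, hbb, hcb, sub_zero, sub_zero]

end Generic

section MatrixLemmas
variable {n : ℕ} {R : Type*} [CommRing R]

theorem vecMulVec_mul_vecMulVec (u v x y : Fin n → R) :
    vecMulVec u v * vecMulVec x y = (v ⬝ᵥ x) • vecMulVec u y := by
  ext r s
  simp only [mul_apply, vecMulVec_apply, Matrix.smul_apply, smul_eq_mul, dotProduct,
    Finset.sum_mul, Finset.mul_sum]
  apply Finset.sum_congr rfl
  intro k _
  ring

theorem det_one_add_vecMulVec {u v : Fin n → R} (h : v ⬝ᵥ u = 0) :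
    det (1 + vecMulVec u v) = 1 := by
  rw [vecMulVec_eq (Fin 1), Matrix.det_one_add_replicateCol_mul_replicateRow, h, add_zero]

end MatrixLemmas

----------------------------------------------------------------
-- Part 1 : rk1 and elemTransv basic lemmas
----------------------------------------------------------------

section Rk1
variable {n : ℕ} {R : Type*} [CommRing R]

open Classical in
/-- `rk1 u v` : the SL element `1 + u vᵀ`, defined when `v ⬝ᵥ u = 0` (else junk `1`). -/
noncomputable def rk1 (u v : Fin n → R) : SL n R :=
  if h : v ⬝ᵥ u = 0 then ⟨1 + vecMulVec u v, det_one_add_vecMulVec h⟩ else 1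

theorem rk1_val {u v : Fin n → R} (h : v ⬝ᵥ u = 0) :
    (rk1 u v).val = 1 + vecMulVec u v := by
  rw [rk1]
  exact congrArg (fun x : SL n R => x.val) (dif_pos h)

theorem rk1_mul_left {u v v' : Fin n → R} (h : v ⬝ᵥ u = 0) (h' : v' ⬝ᵥ u = 0) :
    rk1 u v * rk1 u v' = rk1 u (v + v') := by
  apply Subtype.ext
  have hvv : (v + v') ⬝ᵥ u = 0 := by rw [add_dotProduct, h, h', add_zero]
  show (rk1 u v).val * (rk1 u v').val = _
  rw [rk1_val h, rk1_val h', rk1_val hvv]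
  have : vecMulVec u v * vecMulVec u v' = (v ⬝ᵥ u) • vecMulVec u v' :=
    _root_.vecMulVec_mul_vecMulVec u v u v'
  have h2 : vecMulVec u (v + v') = vecMulVec u v + vecMulVec u v' := by
    ext r s; simp [vecMulVec_apply, mul_add]
  rw [mul_add, add_mul, add_mul, mul_one, one_mul, this, h, zero_smul, add_zero, mul_one, h2]
  abel

theorem rk1_mul_right {u u' v : Fin n → R} (h : v ⬝ᵥ u = 0) (h' : v ⬝ᵥ u' = 0) :
    rk1 u v * rk1 u' v = rk1 (u + u') v := by
  apply Subtype.ext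
  have huu : v ⬝ᵥ (u + u') = 0 := by rw [dotProduct_add, h, h', add_zero]
  show (rk1 u v).val * (rk1 u' v).val = _
  rw [rk1_val h, rk1_val h', rk1_val huu]
  have : vecMulVec u v * vecMulVec u' v = (v ⬝ᵥ u') • vecMulVec u v :=
    _root_.vecMulVec_mul_vecMulVec u v u' v
  have h2 : vecMulVec (u + u') v = vecMulVec u v + vecMulVec u' v := by
    ext r s; simp [vecMulVec_apply, add_mul]
  rw [mul_add, add_mul, add_mul, mul_one, one_mul, this, h', zero_smul, add_zero, mul_one, h2]
  abel

theorem rk1_zero (u : Fin n → R) : rk1 u 0 = 1 := by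
  apply Subtype.ext
  rw [rk1_val (by simp)]
  show 1 + vecMulVec u 0 = (1 : Matrix (Fin n) (Fin n) R)
  have : vecMulVec u (0 : Fin n → R) = 0 := by ext r s; simp [vecMulVec_apply]
  rw [this, add_zero]

theorem rk1_inv {u v : Fin n → R} (h : v ⬝ᵥ u = 0) :
    (rk1 u v)⁻¹ = rk1 u (-v) := by
  apply inv_eq_of_mul_eq_one_left
  rw [rk1_mul_left (by simpa using h) h, neg_add_cancel, rk1_zero]

end Rk1

----------------------------------------------------------------
-- Part 2 : elemTransv basics
----------------------------------------------------------------

section ETransv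
variable {n : ℕ} {R : Type*} [CommRing R]

theorem elemTransv_val (i j : Fin n) (h : i ≠ j) (t : R) :
    (elemTransv i j h t).val = 1 + Matrix.single i j t := rfl

theorem stdBasisMatrix_eq_vecMulVec (i j : Fin n) (t : R) :
    Matrix.single i j t = vecMulVec (Pi.single i t) (Pi.single j 1) := by
  ext r s
  by_cases h1 : i = r <;> by_cases h2 : j = s <;>
    simp [Matrix.single, vecMulVec_apply, Pi.single_apply, h1, h2]

theorem single_dot_single {i j : Fin n} (h : j ≠ i) (x y : R) :
    (Pi.single j y : Fin n → R) ⬝ᵥ Pi.single i x = 0 := by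
  classical
  simp only [dotProduct, Pi.single_apply]
  apply Finset.sum_eq_zero
  intro k _
  by_cases h1 : k = j <;> by_cases h2 : k = i <;> simp [h1, h2] at * <;> tauto

theorem stdBasisMatrix_neg' (i j : Fin n) (x : R) :
    Matrix.single i j (-x) = -(Matrix.single i j x) := by
  ext r s
  by_cases h1 : i = r <;> by_cases h2 : j = s <;> simp [Matrix.single, h1, h2]

theorem elemTransv_eq_rk1 (i j : Fin n) (h : i ≠ j) (t : R) :
    elemTransv i j h t = rk1 (Pi.single i t) (Pi.single j 1) := by
  apply Subtype.ext
  rw [elemTransv_val, rk1_val (single_dot_single (Ne.symm h) t 1),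
    stdBasisMatrix_eq_vecMulVec]

theorem elemTransv_mul (i j : Fin n) (h : i ≠ j) (x y : R) :
    elemTransv i j h x * elemTransv i j h y = elemTransv i j h (x + y) := by
  apply Subtype.ext
  show (elemTransv i j h x).val * (elemTransv i j h y).val = _
  rw [elemTransv_val, elemTransv_val, elemTransv_val]
  have : Matrix.single i j x * Matrix.single i j y = 0 :=
    Matrix.single_mul_single_of_ne x i j _ (Ne.symm h) y
  rw [mul_add, add_mul, add_mul, mul_one, one_mul, mul_one, this, add_zero,
    Matrix.single_add, add_assoc]

theorem elemTransv_zero (i j : Fin n) (h : i ≠ j) :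
    elemTransv i j h (0 : R) = 1 := by
  apply Subtype.ext
  rw [elemTransv_val, Matrix.single_zero, add_zero]
  rfl

theorem elemTransv_inv (i j : Fin n) (h : i ≠ j) (t : R) :
    (elemTransv i j h t)⁻¹ = elemTransv i j h (-t) := by
  apply inv_eq_of_mul_eq_one_left
  rw [elemTransv_mul, neg_add_cancel, elemTransv_zero]

/-- commutator of elementary transvections with a common middle index -/
theorem elemTransv_comm {i m j : Fin n} (him : i ≠ m) (hmj : m ≠ j) (hij : i ≠ j)
    (x y : R) :
    ⁅elemTransv i m him x, elemTransv m j hmj y⁆ = elemTransv i j hij (x * y) := by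
  apply Subtype.ext
  rw [commutatorElement_def, elemTransv_inv, elemTransv_inv]
  show (elemTransv i m him x).val * (elemTransv m j hmj y).val *
      (elemTransv i m him (-x)).val * (elemTransv m j hmj (-y)).val = _
  simp only [elemTransv_val, stdBasisMatrix_neg']
  rw [show (1 : Matrix (Fin n) (Fin n) R) + -(Matrix.single i m x) =
    1 - Matrix.single i m x from by abel,
    show (1 : Matrix (Fin n) (Fin n) R) + -(Matrix.single m j y) =
    1 - Matrix.single m j y from by abel]
  rw [genComm _ _ (Matrix.single_mul_single_of_ne x i m _ (Ne.symm him) x)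
    (Matrix.single_mul_single_of_ne y m j _ (Ne.symm hmj) y)
    (Matrix.single_mul_single_of_ne y m j _ (Ne.symm hij) x),
    Matrix.single_mul_single_same]

/-- the rank-one commutator decomposition: if `u m = 0`, `v m = 0`, `v ⬝ᵥ u = 0` then
`1 + u vᵀ = (1 + u e_mᵀ)(1 + e_m vᵀ)(1 + u e_mᵀ)⁻¹(1 + e_m vᵀ)⁻¹`. -/
theorem rk1_comm_decomp {u v : Fin n → R} {m : Fin n} (hum : u m = 0) (hvm : v m = 0)
    (hvu : v ⬝ᵥ u = 0) :
    rk1 u v = rk1 u (Pi.single m 1) * rk1 (Pi.single m 1) v *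
      (rk1 u (Pi.single m 1))⁻¹ * (rk1 (Pi.single m 1) v)⁻¹ := by
  have d1 : (Pi.single m 1 : Fin n → R) ⬝ᵥ u = 0 := by
    simp [dotProduct, Pi.single_apply, hum]
  have d2 : v ⬝ᵥ (Pi.single m 1 : Fin n → R) = 0 := by
    simp [dotProduct, Pi.single_apply, hvm]
  rw [rk1_inv d1, rk1_inv d2]
  apply Subtype.ext
  show _ = (rk1 u (Pi.single m 1)).val * (rk1 (Pi.single m 1) v).val *
    (rk1 u (-Pi.single m 1)).val * (rk1 (Pi.single m 1) (-v)).val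
  rw [rk1_val hvu, rk1_val d1, rk1_val d2,
    rk1_val (show (-Pi.single m 1 : Fin n → R) ⬝ᵥ u = 0 by rw [neg_dotProduct, d1, neg_zero]),
    rk1_val (show (-v) ⬝ᵥ (Pi.single m 1 : Fin n → R) = 0 by rw [neg_dotProduct, d2, neg_zero])]
  have nv1 : vecMulVec u (-Pi.single m 1 : Fin n → R) = -vecMulVec u (Pi.single m 1) := by
    ext r s; simp [vecMulVec_apply]
  have nv2 : vecMulVec (Pi.single m 1 : Fin n → R) (-v) = -vecMulVec (Pi.single m 1) v := by
    ext r s; simp [vecMulVec_apply]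
  rw [nv1, nv2, show ∀ X : Matrix (Fin n) (Fin n) R, 1 + -X = 1 - X from fun X => by abel,
    show ∀ X : Matrix (Fin n) (Fin n) R, 1 + -X = 1 - X from fun X => by abel]
  rw [genComm _ _
    (by rw [_root_.vecMulVec_mul_vecMulVec, d1, zero_smul])
    (by rw [_root_.vecMulVec_mul_vecMulVec, d2, zero_smul])
    (by rw [_root_.vecMulVec_mul_vecMulVec, hvu, zero_smul]),
    _root_.vecMulVec_mul_vecMulVec]
  congr 1
  simp [dotProduct, Pi.single_apply]

end ETransv

----------------------------------------------------------------
-- Part 3 : subgroup machinery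
----------------------------------------------------------------

section Groups
variable {n : ℕ} {R : Type*} [CommRing R] (a : Ideal R)

theorem elemTransv_mem_E {i j : Fin n} (h : i ≠ j) (t : R) :
    elemTransv i j h t ∈ Esub n (Set.univ : Set R) :=
  Subgroup.subset_closure ⟨i, j, h, t, trivial, rfl⟩

theorem elemTransv_mem_relE {i j : Fin n} (h : i ≠ j) {t : R} (ht : t ∈ a) :
    elemTransv i j h t ∈ relE n a := by
  apply Subgroup.subset_closure
  exact ⟨1, Subgroup.one_mem _, elemTransv i j h t, ⟨i, j, h, t, ht, rfl⟩, by group⟩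

theorem relE_le_E : relE n a ≤ Esub n (Set.univ : Set R) := by
  apply Subgroup.closure_le _ |>.mpr
  rintro x ⟨g, hg, y, ⟨i, j, hij, s, _, rfl⟩, rfl⟩
  exact Subgroup.mul_mem _ (Subgroup.mul_mem _ hg (elemTransv_mem_E hij s))
    (Subgroup.inv_mem _ hg)

theorem relE_conj {e x : SL n R} (he : e ∈ Esub n (Set.univ : Set R))
    (hx : x ∈ relE n a) : e * x * e⁻¹ ∈ relE n a := by
  induction hx using Subgroup.closure_induction with
  | mem y hy =>
    obtain ⟨g, hg, z, hz, rfl⟩ := hy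
    refine Subgroup.subset_closure ⟨e * g, Subgroup.mul_mem _ he hg, z, hz, by group⟩
  | one => simpa using Subgroup.one_mem _
  | mul y z _ _ hy hz =>
    have : e * (y * z) * e⁻¹ = (e * y * e⁻¹) * (e * z * e⁻¹) := by group
    rw [this]; exact Subgroup.mul_mem _ hy hz
  | inv y _ hy =>
    have : e * y⁻¹ * e⁻¹ = (e * y * e⁻¹)⁻¹ := by group
    rw [this]; exact Subgroup.inv_mem _ hy

/-- reduction to generators: to show `⁅g,x⁆ ∈ relE` for all `x ∈ E`, it is enough
to check it on elementary generators. -/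
theorem comm_mem_relE_of_gen {g : SL n R}
    (H : ∀ (i j : Fin n) (hij : i ≠ j) (t : R), ⁅g, elemTransv i j hij t⁆ ∈ relE n a) :
    ∀ x ∈ Esub n (Set.univ : Set R), ⁅g, x⁆ ∈ relE n a := by
  intro x hx
  induction hx using Subgroup.closure_induction with
  | mem y hy => obtain ⟨i, j, hij, t, _, rfl⟩ := hy; exact H i j hij t
  | one => simpa using Subgroup.one_mem _
  | mul y z hy hz hgy hgz =>
    have : ⁅g, y * z⁆ = ⁅g, y⁆ * (y * ⁅g, z⁆ * y⁻¹) := by group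
    rw [this]
    exact Subgroup.mul_mem _ hgy (relE_conj a hy hgz)
  | inv y hy hgy =>
    have : ⁅g, y⁻¹⁆ = y⁻¹ * ⁅g, y⁆⁻¹ * y := by group
    rw [this]
    have h1 : (y⁻¹ : SL n R) ∈ Esub n (Set.univ : Set R) :=
      Subgroup.inv_mem _ hy
    have := relE_conj a h1 (Subgroup.inv_mem _ hgy)
    simpa using this

end Groups

----------------------------------------------------------------
-- Part 4 : Suslin-type membership lemmas
----------------------------------------------------------------

section Suslin
variable {n : ℕ} {R : Type*} [CommRing R] (a : Ideal R)

theorem exists_third (hn : 3 ≤ n) (i j : Fin n) : ∃ m : Fin n, m ≠ i ∧ m ≠ j := by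
  have hc : (({i, j} : Finset (Fin n))ᶜ).Nonempty := by
    rw [← Finset.card_pos, Finset.card_compl]
    have : ({i, j} : Finset (Fin n)).card ≤ 2 := Finset.card_insert_le _ _ |>.trans (by simp)
    simp only [Fintype.card_fin]
    omega
  obtain ⟨m, hm⟩ := hc
  simp only [Finset.mem_compl, Finset.mem_insert, Finset.mem_singleton, not_or] at hm
  exact ⟨m, hm.1, hm.2⟩

theorem rk1_single_single_row {m k : Fin n} (h : m ≠ k) (x : R) :
    rk1 (Pi.single m 1) (Pi.single k x) = elemTransv m k h x := by
  apply Subtype.ext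
  rw [rk1_val (single_dot_single (Ne.symm h) 1 x), elemTransv_val]
  congr 1
  ext r s
  by_cases h1 : m = r <;> by_cases h2 : k = s <;>
    simp [Matrix.single, vecMulVec_apply, Pi.single_apply, h1, h2]

/-- row version, level `a` : `1 + e_m vᵀ ∈ relE` when `v` has entries in `a` and `v m = 0`. -/
theorem rowN (v : Fin n → R) (hvm : v m = 0) (hva : ∀ l, v l ∈ a) :
    rk1 (Pi.single m 1) v ∈ relE n a := by
  classical
  have key : ∀ T : Finset (Fin n), ∀ v : Fin n → R, (∀ l ∉ T, v l = 0) → v m = 0 →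
      (∀ l, v l ∈ a) → rk1 (Pi.single m 1) v ∈ relE n a := by
    intro T
    induction T using Finset.induction_on with
    | empty =>
      intro v hv _ _
      have : v = 0 := funext fun l => hv l (by simp)
      rw [this, rk1_zero]
      exact Subgroup.one_mem _
    | @insert k T hk ih =>
      intro v hv hvm hva
      have hsplit : v = Pi.single k (v k) + Function.update v k 0 := by
        ext l
        by_cases h : l = k <;> simp [Pi.single_apply, Function.update_apply, h]
      by_cases hkm : k = m
      · refine ih v (fun l hl => ?_) hvm hva
        by_cases h : l = k
        · rw [h, hkm]; exact hvm
        · exact hv l (by simp [h, hl])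
      · rw [hsplit, ← rk1_mul_left (by simp [dotProduct_single, Pi.single_apply, hkm])
          (by simp [dotProduct_single, Function.update_apply, Ne.symm hkm, hvm])]
        refine Subgroup.mul_mem _ ?_ (ih _ (fun l hl => ?_) (by simp [Function.update_apply, Ne.symm hkm, hvm]) ?_)
        · rw [rk1_single_single_row (Ne.symm hkm)]
          exact elemTransv_mem_relE a _ (hva k)
        · by_cases h : l = k <;> simp [Function.update_apply, h]
          exact hv l (by simp [h, hl])
        · intro l
          by_cases h : l = k <;> simp [Function.update_apply, h, hva l]
  exact key Finset.univ v (by simp) hvm hva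

/-- column version, level `a`. -/
theorem colN (u : Fin n → R) (hum : u m = 0) (hua : ∀ k, u k ∈ a) :
    rk1 u (Pi.single m 1) ∈ relE n a := by
  classical
  have key : ∀ T : Finset (Fin n), ∀ u : Fin n → R, (∀ l ∉ T, u l = 0) → u m = 0 →
      (∀ l, u l ∈ a) → rk1 u (Pi.single m 1) ∈ relE n a := by
    intro T
    induction T using Finset.induction_on with
    | empty =>
      intro u hu _ _
      have : u = 0 := funext fun l => hu l (by simp)
      rw [this]
      have : rk1 (0 : Fin n → R) (Pi.single m 1) = 1 := by
        apply Subtype.ext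
        rw [rk1_val (by simp [dotProduct])]
        have : vecMulVec (0 : Fin n → R) (Pi.single m 1) = 0 := by
          ext r s; simp [vecMulVec_apply]
        rw [this, add_zero]; rfl
      rw [this]; exact Subgroup.one_mem _
    | @insert k T hk ih =>
      intro u hu hum hua
      have hsplit : u = Pi.single k (u k) + Function.update u k 0 := by
        ext l
        by_cases h : l = k <;> simp [Pi.single_apply, Function.update_apply, h]
      by_cases hkm : k = m
      · refine ih u (fun l hl => ?_) hum hua
        by_cases h : l = k
        · rw [h, hkm]; exact hum
        · exact hu l (by simp [h, hl])
      · rw [hsplit, ← rk1_mul_right (by simp [single_dotProduct, Pi.single_apply, Ne.symm hkm])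
          (by simp [single_dotProduct, Function.update_apply, Ne.symm hkm, hum])]
        refine Subgroup.mul_mem _ ?_ (ih _ (fun l hl => ?_) (by simp [Function.update_apply, Ne.symm hkm, hum]) ?_)
        · rw [← elemTransv_eq_rk1 k m hkm]
          exact elemTransv_mem_relE a _ (hua k)
        · by_cases h : l = k <;> simp [Function.update_apply, h]
          exact hu l (by simp [h, hl])
        · intro l
          by_cases h : l = k <;> simp [Function.update_apply, h, hua l]
  exact key Finset.univ u (by simp) hum hua

/-- column version, in `E`. -/
theorem colE (u : Fin n → R) (hum : u m = 0) :
    rk1 u (Pi.single m 1) ∈ Esub n (Set.univ : Set R) := by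
  classical
  have key : ∀ T : Finset (Fin n), ∀ u : Fin n → R, (∀ l ∉ T, u l = 0) → u m = 0 →
      rk1 u (Pi.single m 1) ∈ Esub n (Set.univ : Set R) := by
    intro T
    induction T using Finset.induction_on with
    | empty =>
      intro u hu _
      have : u = 0 := funext fun l => hu l (by simp)
      rw [this]
      have : rk1 (0 : Fin n → R) (Pi.single m 1) = 1 := by
        apply Subtype.ext
        rw [rk1_val (by simp [dotProduct])]
        have : vecMulVec (0 : Fin n → R) (Pi.single m 1) = 0 := by
          ext r s; simp [vecMulVec_apply]
        rw [this, add_zero]; rfl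
      rw [this]; exact Subgroup.one_mem _
    | @insert k T hk ih =>
      intro u hu hum
      have hsplit : u = Pi.single k (u k) + Function.update u k 0 := by
        ext l
        by_cases h : l = k <;> simp [Pi.single_apply, Function.update_apply, h]
      by_cases hkm : k = m
      · refine ih u (fun l hl => ?_) hum
        by_cases h : l = k
        · rw [h, hkm]; exact hum
        · exact hu l (by simp [h, hl])
      · rw [hsplit, ← rk1_mul_right (by simp [single_dotProduct, Pi.single_apply, Ne.symm hkm])
          (by simp [single_dotProduct, Function.update_apply, Ne.symm hkm, hum])]
        refine Subgroup.mul_mem _ ?_ (ih _ (fun l hl => ?_) (by simp [Function.update_apply, Ne.symm hkm, hum]))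
        · rw [← elemTransv_eq_rk1 k m hkm]
          exact elemTransv_mem_E hkm (u k)
        · by_cases h : l = k <;> simp [Function.update_apply, h]
          exact hu l (by simp [h, hl])
  exact key Finset.univ u (by simp) hum

end Suslin

----------------------------------------------------------------
-- Part 5 : relative Suslin lemmas
----------------------------------------------------------------

section Suslin2
variable {n : ℕ} {R : Type*} [CommRing R] (a : Ideal R)

/-- `sfun u (k,l) = u_l e_k - u_k e_l`, a vector orthogonal to `u`. -/
def sfun (u : Fin n → R) (p : Fin n × Fin n) : Fin n → R :=
  u p.2 • (Pi.single p.1 1 : Fin n → R) - u p.1 • (Pi.single p.2 1 : Fin n → R)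

theorem sfun_dot (u : Fin n → R) (p : Fin n × Fin n) : sfun u p ⬝ᵥ u = 0 := by
  simp [sfun, sub_dotProduct, smul_dotProduct, single_dotProduct, mul_comm]

theorem sfun_apply (u : Fin n → R) (p : Fin n × Fin n) (r : Fin n) :
    sfun u p r = (if r = p.1 then u p.2 else 0) - (if r = p.2 then u p.1 else 0) := by
  simp [sfun, Pi.single_apply]

theorem sum_dot (T : Finset (Fin n × Fin n)) (f : Fin n × Fin n → Fin n → R) (u : Fin n → R) :
    (∑ p ∈ T, f p) ⬝ᵥ u = ∑ p ∈ T, f p ⬝ᵥ u := by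
  simp only [dotProduct, Finset.sum_apply, Finset.sum_mul]
  rw [Finset.sum_comm]

/-- Relative Suslin Lemma A : `1 + u vᵀ ∈ relE` when `u, v` both vanish at `m`,
`v ⬝ᵥ u = 0`, and `v` has entries in `a`. -/
theorem suslinA {u v : Fin n → R} {m : Fin n} (hum : u m = 0) (hvm : v m = 0)
    (hvu : v ⬝ᵥ u = 0) (hva : ∀ l, v l ∈ a) : rk1 u v ∈ relE n a := by
  rw [rk1_comm_decomp hum hvm hvu]
  refine Subgroup.mul_mem _ (relE_conj a (colE u hum) (rowN a v hvm hva)) ?_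
  exact Subgroup.inv_mem _ (rowN a v hvm hva)

/-- Relative Suslin Lemma B : `1 + c·u (u_l e_k - u_k e_l)ᵀ ∈ relE` for `c ∈ a`. -/
theorem suslinB (hn : 3 ≤ n) (u : Fin n → R) {c : R} (hc : c ∈ a) (p : Fin n × Fin n) :
    rk1 u (c • sfun u p) ∈ relE n a := by
  classical
  obtain ⟨k, l⟩ := p
  by_cases hkl : k = l
  · have : sfun u (k, l) = 0 := by subst hkl; simp [sfun]
    rw [this, smul_zero, rk1_zero]
    exact Subgroup.one_mem _
  obtain ⟨m, hmk, hml⟩ := exists_third hn k l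
  have hsm : sfun u (k, l) m = 0 := by
    rw [sfun_apply]
    simp [hmk, hml]
  have hcs_m : (c • sfun u (k, l)) m = 0 := by simp [hsm]
  have hdot : ∀ w : Fin n → R, (c • sfun u (k, l)) ⬝ᵥ w = c * (sfun u (k, l) ⬝ᵥ w) := by
    intro w; simp [smul_dotProduct, smul_eq_mul]
  set u'' := Function.update u m 0 with hu''
  have hu''m : u'' m = 0 := by simp [hu'']
  have hu''k : u'' k = u k := by simp [hu'', Function.update_apply, Ne.symm hmk]
  have hu''l : u'' l = u l := by simp [hu'', Function.update_apply, Ne.symm hml]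
  have hdot_u'' : (c • sfun u (k, l)) ⬝ᵥ u'' = 0 := by
    rw [hdot]
    have : sfun u (k, l) ⬝ᵥ u'' = 0 := by
      simp [sfun, sub_dotProduct, smul_dotProduct, single_dotProduct, hu''k, hu''l, mul_comm]
    rw [this, mul_zero]
  set q : Fin n → R := Pi.single m (u m) with hq
  have hdot_q : (c • sfun u (k, l)) ⬝ᵥ q = 0 := by
    rw [hq]
    rw [dotProduct_single]
    simp [hcs_m]
  have hsplit : u = u'' + q := by
    ext r
    by_cases h : r = m <;> simp [hu'', hq, Function.update_apply, Pi.single_apply, h]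
  have step1 : rk1 u (c • sfun u (k, l)) =
      rk1 u'' (c • sfun u (k, l)) * rk1 q (c • sfun u (k, l)) := by
    rw [rk1_mul_right hdot_u'' hdot_q, ← hsplit]
  rw [step1]
  refine Subgroup.mul_mem _ ?_ ?_
  · exact suslinA a hu''m hcs_m hdot_u'' (fun r => Ideal.mul_mem_right _ _ hc)
  · have : rk1 q (c • sfun u (k, l)) =
        rk1 (Pi.single m 1) ((u m * c) • sfun u (k, l)) := by
      apply Subtype.ext
      rw [rk1_val hdot_q, rk1_val (by rw [smul_dotProduct, dotProduct_single]; simp [hsm])]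
      congr 1
      ext r s
      rw [vecMulVec_apply, vecMulVec_apply, hq]
      by_cases h : r = m
      · subst h
        simp [Pi.single_apply, smul_eq_mul]
        ring
      · simp [Pi.single_apply, h]
    rw [this]
    refine rowN a _ (by simp [hsm]) (fun r => ?_)
    exact Ideal.mul_mem_right _ _ (Ideal.mul_mem_left _ _ hc)

/-- Relative Suslin Lemma D : products of the `suslinB` generators. -/
theorem suslinD (hn : 3 ≤ n) (u : Fin n → R) (T : Finset (Fin n × Fin n))
    (c : Fin n × Fin n → R) (hc : ∀ p ∈ T, c p ∈ a) :
    rk1 u (∑ p ∈ T, c p • sfun u p) ∈ relE n a := by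
  classical
  induction T using Finset.induction_on with
  | empty =>
    rw [Finset.sum_empty, rk1_zero]
    exact Subgroup.one_mem _
  | @insert p T hp ih =>
    have d1 : (c p • sfun u p) ⬝ᵥ u = 0 := by rw [smul_dotProduct, sfun_dot, smul_zero]
    have d2 : (∑ q ∈ T, c q • sfun u q) ⬝ᵥ u = 0 := by
      rw [sum_dot]
      refine Finset.sum_eq_zero fun q _ => ?_
      rw [smul_dotProduct, sfun_dot, smul_zero]
    rw [Finset.sum_insert hp, ← rk1_mul_left d1 d2]
    exact Subgroup.mul_mem _ (suslinB a hn u (hc p (Finset.mem_insert_self p T)) p)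
      (ih fun q hq => hc q (Finset.mem_insert_of_mem hq))

end Suslin2

----------------------------------------------------------------
-- Part 6 : reduction map and congruence subgroups
----------------------------------------------------------------

section Red
variable {n : ℕ} {R : Type*} [CommRing R] (a : Ideal R)

theorem redMap_val (g : SL n R) :
    (redMap n a g).val = (g.val).map (Ideal.Quotient.mk a) := by
  rw [redMap, Matrix.SpecialLinearGroup.map_apply_coe, RingHom.mapMatrix_apply]

theorem redMap_apply (g : SL n R) (k l : Fin n) :
    (redMap n a g).val k l = Ideal.Quotient.mk a (g.val k l) := by
  rw [redMap_val]; rfl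

theorem redMap_elemTransv (i j : Fin n) (h : i ≠ j) (t : R) :
    redMap n a (elemTransv i j h t) = elemTransv i j h (Ideal.Quotient.mk a t) := by
  apply Subtype.ext
  ext k l
  rw [redMap_apply, elemTransv_val, elemTransv_val]
  by_cases h1 : i = k <;> by_cases h2 : j = l <;>
    simp [Matrix.add_apply, Matrix.one_apply, Matrix.single, h1, h2]

theorem mem_Ccong_iff (g : SL n R) :
    g ∈ Ccong n a ↔ redMap n a g ∈ Subgroup.center (SL n (R ⧸ a)) := Iff.rfl

theorem relE_le_Ccong : relE n a ≤ Ccong n a := by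
  apply Subgroup.closure_le _ |>.mpr
  rintro x ⟨g, _, y, ⟨i, j, hij, s, hs, rfl⟩, rfl⟩
  have h1 : redMap n a (elemTransv i j hij s) = 1 := by
    rw [redMap_elemTransv, Ideal.Quotient.eq_zero_iff_mem.mpr hs, elemTransv_zero]
  show redMap n a (g * elemTransv i j hij s * g⁻¹) ∈ Subgroup.center _
  rw [MonoidHom.map_mul, MonoidHom.map_mul, h1, mul_one, MonoidHom.map_inv, mul_inv_cancel]
  exact Subgroup.one_mem _

theorem comm_central_left {G : Type*} [Group G] {z : G}
    (hz : z ∈ Subgroup.center G) (x y : G) : ⁅z * x, y⁆ = ⁅x, y⁆ := by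
  have h : z * (x * y * x⁻¹) = (x * y * x⁻¹) * z :=
    (Subgroup.mem_center_iff.mp hz _).symm
  calc ⁅z * x, y⁆ = z * (x * y * x⁻¹) * z⁻¹ * y⁻¹ := by group
    _ = (x * y * x⁻¹) * z * z⁻¹ * y⁻¹ := by rw [h]
    _ = ⁅x, y⁆ := by group

theorem comm_central_right {G : Type*} [Group G] {w : G}
    (hw : w ∈ Subgroup.center G) (x y : G) : ⁅x, w * y⁆ = ⁅x, y⁆ := by
  have h : w * (y * x⁻¹ * y⁻¹) = (y * x⁻¹ * y⁻¹) * w :=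
    (Subgroup.mem_center_iff.mp hw _).symm
  calc ⁅x, w * y⁆ = x * (w * (y * x⁻¹ * y⁻¹)) * w⁻¹ := by group
    _ = x * ((y * x⁻¹ * y⁻¹) * w) * w⁻¹ := by rw [h]
    _ = ⁅x, y⁆ := by group

end Red

----------------------------------------------------------------
-- Part 7 : center characterization
----------------------------------------------------------------

section Center
variable {n : ℕ} {S : Type*} [CommRing S]

theorem scalar_of_commute_transv (h : SL n S)
    (H : ∀ (i j : Fin n) (hij : i ≠ j) (s : S),
      h * elemTransv i j hij s = elemTransv i j hij s * h) :
    ∃ μ : S, h.val = Matrix.scalar (Fin n) μ := by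
  have : h.val ∈ Set.range (Matrix.scalar (Fin n)) := by
    apply Matrix.mem_range_scalar_of_commute_transvectionStruct
    intro t
    have := H t.i t.j t.hij t.c
    have hval : h.val * (elemTransv t.i t.j t.hij t.c).val =
        (elemTransv t.i t.j t.hij t.c).val * h.val := by
      rw [← Matrix.SpecialLinearGroup.coe_mul, ← Matrix.SpecialLinearGroup.coe_mul, this]
    show t.toMatrix * h.val = h.val * t.toMatrix
    have : t.toMatrix = (elemTransv t.i t.j t.hij t.c).val := rfl
    rw [this, hval]
  obtain ⟨μ, hμ⟩ := this
  exact ⟨μ, hμ.symm⟩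

theorem central_of_scalar (h : SL n S) (μ : S) (hμ : h.val = Matrix.scalar (Fin n) μ) :
    h ∈ Subgroup.center (SL n S) := by
  apply Subgroup.mem_center_iff.mpr
  intro g
  apply Subtype.ext
  rw [Matrix.SpecialLinearGroup.coe_mul, Matrix.SpecialLinearGroup.coe_mul, hμ]
  exact (Matrix.scalar_commute μ (fun r => mul_comm μ r) g.val).symm.eq

end Center

----------------------------------------------------------------
-- Part 8 : inclusion (iii) ⊆ (i)  and  (i) ⊆ (iv)
----------------------------------------------------------------

section Incl
variable {n : ℕ} {R : Type*} [CommRing R] (a : Ideal R)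

theorem subset31 (hn : 3 ≤ n) {g : SL n R}
    (hg : ∀ x ∈ Esub n (Set.univ : Set R), ⁅g, x⁆ ∈ Ccong n a) :
    g ∈ Ccong n a := by
  set h := redMap n a g with hh
  -- step A : commutators with transvections are central
  have stepA : ∀ (i j : Fin n) (hij : i ≠ j) (s : R ⧸ a),
      ⁅h, elemTransv i j hij s⁆ ∈ Subgroup.center (SL n (R ⧸ a)) := by
    intro i j hij s
    obtain ⟨t, rfl⟩ := Ideal.Quotient.mk_surjective s
    have h1 := hg (elemTransv i j hij t) (elemTransv_mem_E hij t)
    rw [mem_Ccong_iff, map_commutatorElement, redMap_elemTransv] at h1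
    exact h1
  -- step B : h commutes with transvections
  have stepB : ∀ (i j : Fin n) (hij : i ≠ j) (s : R ⧸ a),
      h * elemTransv i j hij s = elemTransv i j hij s * h := by
    intro i j hij s
    obtain ⟨m, hmi, hmj⟩ := exists_third hn i j
    set e1 := elemTransv i m (Ne.symm hmi) s with he1
    set e2 := elemTransv m j hmj (1 : R ⧸ a) with he2
    have hz1 : h * e1 * h⁻¹ = ⁅h, e1⁆ * e1 := by group
    have hz2 : h * e2 * h⁻¹ = ⁅h, e2⁆ * e2 := by group
    have key : h * elemTransv i j hij s * h⁻¹ = elemTransv i j hij s := by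
      have hc : elemTransv i j hij s = ⁅e1, e2⁆ := by
        rw [he1, he2, elemTransv_comm (Ne.symm hmi) hmj hij s (1 : R ⧸ a), mul_one]
      rw [hc]
      have : h * ⁅e1, e2⁆ * h⁻¹ = ⁅h * e1 * h⁻¹, h * e2 * h⁻¹⁆ := by group
      rw [this, hz1, hz2, comm_central_left (stepA i m (Ne.symm hmi) s) e1 _,
        comm_central_right (stepA m j hmj (1 : R ⧸ a)) e1 e2]
    calc h * elemTransv i j hij s = (h * elemTransv i j hij s * h⁻¹) * h := by group
      _ = elemTransv i j hij s * h := by rw [key]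
  obtain ⟨μ, hμ⟩ := scalar_of_commute_transv h stepB
  exact (mem_Ccong_iff a g).mpr (central_of_scalar h μ hμ)

theorem subset14 {g : SL n R} (hg : g ∈ Ccong n a) (x : SL n R) :
    ⁅g, x⁆ ∈ Ccong n a := by
  rw [mem_Ccong_iff, map_commutatorElement]
  have hc : redMap n a g ∈ Subgroup.center (SL n (R ⧸ a)) := hg
  have : Commute (redMap n a g) (redMap n a x) :=
    (Subgroup.mem_center_iff.mp hc _).symm
  rw [commutatorElement_eq_one_iff_commute.mpr this]
  exact Subgroup.one_mem _

end Incl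

----------------------------------------------------------------
-- Part 9 : the core computation : [C, elementary] ⊆ relE
----------------------------------------------------------------

section Core
variable {n : ℕ} {R : Type*} [CommRing R] (a : Ideal R)

theorem mul_stdBasis_mul (M N : Matrix (Fin n) (Fin n) R) (i j : Fin n) (t : R) :
    M * Matrix.single i j t * N = vecMulVec (fun k => M k i) (fun l => t * N j l) := by
  ext k l
  rw [Matrix.mul_apply]
  calc ∑ r, (M * Matrix.single i j t) k r * N r l
      = ∑ r, (if r = j then M k i * t * N r l else 0) := by
        refine Finset.sum_congr rfl fun r _ => ?_
        by_cases hr : r = j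
        · subst hr
          rw [if_pos rfl, Matrix.mul_single_apply_same, mul_assoc]
        · rw [if_neg hr, Matrix.mul_single_apply_of_ne _ _ _ _ _ hr, zero_mul]
    _ = M k i * t * N j l := by rw [Finset.sum_ite_eq' Finset.univ j fun r => M k i * t * N r l]; simp
    _ = _ := by rw [vecMulVec_apply]; ring

theorem core (hn : 3 ≤ n) {g : SL n R} (hg : g ∈ Ccong n a)
    (i j : Fin n) (hij : i ≠ j) (t : R) :
    ⁅g, elemTransv i j hij t⁆ ∈ relE n a := by
  classical
  set mk := Ideal.Quotient.mk a with hmk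
  -- the scalar values of g and g⁻¹ mod a
  have hcen : redMap n a g ∈ Subgroup.center (SL n (R ⧸ a)) := hg
  obtain ⟨μ, hμ⟩ := scalar_of_commute_transv (redMap n a g)
    (fun i' j' hij' s => (Subgroup.mem_center_iff.mp hcen _).symm)
  have hcen2 : redMap n a g⁻¹ ∈ Subgroup.center (SL n (R ⧸ a)) := by
    rw [MonoidHom.map_inv]; exact Subgroup.inv_mem _ hcen
  obtain ⟨μ', hμ'⟩ := scalar_of_commute_transv (redMap n a g⁻¹)
    (fun i' j' hij' s => (Subgroup.mem_center_iff.mp hcen2 _).symm)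
  have z0 : Fin n := ⟨0, by omega⟩
  have hμμ' : μ * μ' = 1 := by
    have h1 : redMap n a g * redMap n a g⁻¹ = 1 := by
      rw [← MonoidHom.map_mul, mul_inv_cancel, MonoidHom.map_one]
    have h2 : (redMap n a g).val * (redMap n a g⁻¹).val = 1 := by
      rw [← Matrix.SpecialLinearGroup.coe_mul, h1]; rfl
    rw [hμ, hμ'] at h2
    have h3 := congrFun (congrFun h2 z0) z0
    simpa [Matrix.scalar_apply, Matrix.diagonal_mul_diagonal, Matrix.diagonal_apply,
      Matrix.one_apply] using h3
  -- entries
  have hgval : ∀ k l, mk (g.val k l) = if k = l then μ else 0 := by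
    intro k l
    rw [hmk, ← redMap_apply a g k l, hμ]
    simp [Matrix.scalar_apply, Matrix.diagonal_apply]
  have hgival : ∀ k l, mk ((g⁻¹ : SL n R).val k l) = if k = l then μ' else 0 := by
    intro k l
    rw [hmk, ← redMap_apply a g⁻¹ k l, hμ']
    simp [Matrix.scalar_apply, Matrix.diagonal_apply]
  set u : Fin n → R := fun k => g.val k i with hu
  set v : Fin n → R := fun l => (g⁻¹ : SL n R).val j l with hv
  set w : Fin n → R := fun l => (g⁻¹ : SL n R).val i l with hw
  have hcoe : (g⁻¹ : SL n R).val * g.val = 1 := by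
    rw [← Matrix.SpecialLinearGroup.coe_mul, inv_mul_cancel]; rfl
  have hvu : v ⬝ᵥ u = 0 := by
    have := congrFun (congrFun hcoe j) i
    rw [Matrix.mul_apply] at this
    rw [dotProduct, this, Matrix.one_apply_ne hij.symm]
  have hwu : w ⬝ᵥ u = 1 := by
    have := congrFun (congrFun hcoe i) i
    rw [Matrix.mul_apply] at this
    rw [dotProduct, this, Matrix.one_apply_eq]
  have hmu : ∀ k, mk (u k) = if k = i then μ else 0 := fun k => hgval k i
  have hmv : ∀ l, mk (v l) = if j = l then μ' else 0 := fun l => hgival j l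
  have hmw : ∀ l, mk (w l) = if i = l then μ' else 0 := fun l => hgival i l
  have mem_a : ∀ x : R, mk x = 0 → x ∈ a := fun x hx => Ideal.Quotient.eq_zero_iff_mem.mp hx
  -- the coefficients
  set c : Fin n × Fin n → R := fun p => t * (v p.1 * w p.2) with hc
  -- Id1 : the commutator as a rank one update
  have hgmul : g.val * Matrix.single i j t * (g⁻¹ : SL n R).val =
      vecMulVec u (t • v) := by
    rw [mul_stdBasis_mul]
    ext k l
    rw [vecMulVec_apply, vecMulVec_apply]
    simp only [hu, hv, Pi.smul_apply, smul_eq_mul]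
  have hdot_tv : (t • v) ⬝ᵥ u = 0 := by rw [smul_dotProduct, hvu, smul_zero]
  have Id1 : ⁅g, elemTransv i j hij t⁆ = rk1 u (t • v) * elemTransv i j hij (-t) := by
    apply Subtype.ext
    rw [commutatorElement_def, elemTransv_inv]
    show g.val * (elemTransv i j hij t).val * (g⁻¹ : SL n R).val *
        (elemTransv i j hij (-t)).val = (rk1 u (t • v)).val * (elemTransv i j hij (-t)).val
    rw [rk1_val hdot_tv]
    congr 1
    rw [elemTransv_val, mul_add, mul_one, add_mul, hgmul]
    have : g.val * (g⁻¹ : SL n R).val = 1 := by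
      rw [← Matrix.SpecialLinearGroup.coe_mul, mul_inv_cancel]; rfl
    rw [this]
  -- Id2 : decompose t•v into the sfun basis
  have sumv : (∑ p : Fin n × Fin n, c p • sfun u p) = t • v := by
    funext r
    rw [Finset.sum_apply]
    simp only [Pi.smul_apply, smul_eq_mul, sfun_apply]
    rw [Fintype.sum_prod_type]
    have e1 : ∀ k : Fin n, ∑ l : Fin n,
        c (k, l) * ((if r = k then u l else 0) - (if r = l then u k else 0)) =
        (if r = k then t * v k * (w ⬝ᵥ u) else 0) - t * (v k * (w r * u k)) := by
      intro k
      simp only [mul_sub]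
      rw [Finset.sum_sub_distrib]
      congr 1
      · by_cases h : r = k
        · subst h
          rw [if_pos rfl, dotProduct, Finset.mul_sum]
          refine Finset.sum_congr rfl fun l _ => ?_
          rw [if_pos rfl, hc]
          ring
        · simp [h]
      · calc ∑ l, c (k, l) * (if r = l then u k else 0)
            = ∑ l, (if r = l then c (k, l) * u k else 0) := by
              refine Finset.sum_congr rfl fun l _ => ?_
              by_cases h : r = l <;> simp [h]
          _ = c (k, r) * u k := by
              rw [Finset.sum_ite_eq Finset.univ r fun l => c (k, l) * u k]; simp
          _ = t * (v k * (w r * u k)) := by rw [hc]; ring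
    rw [Finset.sum_congr rfl fun k _ => e1 k, Finset.sum_sub_distrib]
    have e2 : ∑ k : Fin n, (if r = k then t * v k * (w ⬝ᵥ u) else 0) = t * v r := by
      rw [Finset.sum_ite_eq Finset.univ r fun k => t * v k * (w ⬝ᵥ u)]
      simp [hwu]
    have e3 : ∑ k : Fin n, t * (v k * (w r * u k)) = t * w r * (v ⬝ᵥ u) := by
      rw [dotProduct, Finset.mul_sum]
      exact Finset.sum_congr rfl fun k _ => by ring
    rw [e2, e3, hvu, mul_zero, sub_zero]
  -- split off the (j,i) term
  have hdots : ∀ p : Fin n × Fin n, (c p • sfun u p) ⬝ᵥ u = 0 := fun p => by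
    rw [smul_dotProduct, sfun_dot, smul_zero]
  have hsum_erase : (∑ p ∈ Finset.univ.erase (j,i), c p • sfun u p) + c (j,i) • sfun u (j,i)
      = t • v := by
    rw [Finset.sum_erase_add Finset.univ _ (Finset.mem_univ (j,i)), sumv]
  have hdot_erase : (∑ p ∈ Finset.univ.erase (j,i), c p • sfun u p) ⬝ᵥ u = 0 := by
    rw [sum_dot]; exact Finset.sum_eq_zero fun p _ => hdots p
  have Id2 : rk1 u (t • v) = rk1 u (∑ p ∈ Finset.univ.erase (j,i), c p • sfun u p) *
      rk1 u (c (j,i) • sfun u (j,i)) := by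
    rw [rk1_mul_left hdot_erase (hdots _), hsum_erase]
  have mem1 : rk1 u (∑ p ∈ Finset.univ.erase (j,i), c p • sfun u p) ∈ relE n a := by
    apply suslinD a hn u _ c
    intro p hp
    have hne : p ≠ (j, i) := (Finset.mem_erase.mp hp).1
    by_cases hk : p.1 = j
    · have hl : p.2 ≠ i := fun h => hne (Prod.ext hk h)
      rw [hc]
      exact Ideal.mul_mem_left _ _ (Ideal.mul_mem_left _ _
        (mem_a _ (by rw [hmw p.2, if_neg fun h => hl h.symm])))
    · rw [hc]
      exact Ideal.mul_mem_left _ _ (Ideal.mul_mem_right _ _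
        (mem_a _ (by rw [hmv p.1, if_neg fun h => hk h.symm])))
  -- the remaining factor
  set s0 : Fin n → R := sfun u (j,i) with hs0
  set β : R := c (j,i) with hβ
  obtain ⟨m, hmi, hmj⟩ := exists_third hn i j
  have hs0m : s0 m = 0 := by rw [hs0, sfun_apply]; simp [hmi, hmj]
  have hs0i : s0 i = -(u j) := by rw [hs0, sfun_apply]; simp [hij]
  have hs0j : s0 j = u i := by rw [hs0, sfun_apply]; simp [Ne.symm hij]
  have hs0other : ∀ s : Fin n, s ≠ j → s ≠ i → s0 s = 0 := by
    intro s h1 h2; rw [hs0, sfun_apply]; simp [h1, h2]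
  have hs0dotu : s0 ⬝ᵥ u = 0 := sfun_dot u (j, i)
  set βs : Fin n → R := β • s0 with hβs
  have hβsm : βs m = 0 := by rw [hβs]; simp [hs0m]
  set u'' : Fin n → R := Function.update u m 0 with hu''
  have hu''m : u'' m = 0 := by simp [hu'']
  have hu''i : u'' i = u i := by simp [hu'', Function.update_apply, Ne.symm hmi]
  have hu''j : u'' j = u j := by simp [hu'', Function.update_apply, Ne.symm hmj]
  have hs0u'' : s0 ⬝ᵥ u'' = 0 := by
    rw [hs0, sfun, sub_dotProduct, smul_dotProduct, smul_dotProduct,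
      single_dotProduct, single_dotProduct]
    show u i * (1 * u'' j) - u j * (1 * u'' i) = 0
    rw [hu''i, hu''j]; ring
  have hβsu'' : βs ⬝ᵥ u'' = 0 := by rw [hβs, smul_dotProduct, hs0u'', smul_zero]
  set q : Fin n → R := Pi.single m (u m) with hq
  have hβsq : βs ⬝ᵥ q = 0 := by rw [hq, dotProduct_single, hβsm, zero_mul]
  have hsplit : u = u'' + q := by
    ext r
    by_cases h : r = m <;> simp [hu'', hq, Function.update_apply, Pi.single_apply, h]
  have Id3 : rk1 u βs = rk1 u'' βs * rk1 q βs := by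
    rw [rk1_mul_right hβsu'' hβsq, ← hsplit]
  have hum_a : mk (u m) = 0 := by rw [hmu m, if_neg hmi]
  have memB : rk1 q βs ∈ relE n a := by
    have hrw : rk1 q βs = rk1 (Pi.single m 1) ((u m * β) • s0) := by
      apply Subtype.ext
      rw [rk1_val hβsq, rk1_val (show ((u m * β) • s0) ⬝ᵥ (Pi.single m 1 : Fin n → R) = 0 by
        rw [dotProduct_single]; show ((u m * β) * s0 m) * 1 = 0; rw [hs0m]; ring)]
      congr 1
      ext r s
      rw [vecMulVec_apply, vecMulVec_apply, hq]
      by_cases h : r = m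
      · subst h
        simp only [hβs, Pi.smul_apply, smul_eq_mul, Pi.single_eq_same]
        ring
      · simp [Pi.single_apply, h]
    rw [hrw]
    refine rowN a _ (show ((u m * β) • s0) m = 0 by show (u m * β) * s0 m = 0; rw [hs0m]; ring) fun r => ?_
    exact Ideal.mul_mem_right _ _ (Ideal.mul_mem_right _ _ (mem_a _ hum_a))
  -- decompose  P = P2 * P1
  set P2 : SL n R := elemTransv i m (Ne.symm hmi) (u i) with hP2
  set u3 : Fin n → R := Function.update u'' i 0 with hu3
  have hu3m : u3 m = 0 := by simp [hu3, Function.update_apply, hmi, hu''m]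
  set P1 : SL n R := rk1 u3 (Pi.single m 1) with hP1
  have hadd : (Pi.single i (u i) : Fin n → R) + u3 = u'' := by
    ext r
    by_cases h1 : r = i
    · subst h1; simp [hu3, Pi.single_apply, Function.update_apply, hu''i]
    · simp [hu3, Pi.single_apply, Function.update_apply, h1]
  have hP_decomp : rk1 u'' (Pi.single m 1) = P2 * P1 := by
    rw [hP2, elemTransv_eq_rk1 i m (Ne.symm hmi) (u i), hP1,
      rk1_mul_right (single_dot_single hmi (u i) 1)
        (by rw [single_dotProduct, hu3m, one_mul]), hadd]
  -- decompose  Q = Q2 * Q1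
  set Q2 : SL n R := elemTransv m j hmj (β * u i) with hQ2
  set Q1 : SL n R := elemTransv m i hmi (-(β * u j)) with hQ1
  have hβs_dot_single : βs ⬝ᵥ (Pi.single m 1 : Fin n → R) = 0 := by
    rw [dotProduct_single, hβsm, zero_mul]
  have hvecβs : vecMulVec (Pi.single m 1 : Fin n → R) βs =
      Matrix.single m j (β * u i) + Matrix.single m i (-(β * u j)) := by
    ext r s
    rw [vecMulVec_apply, Matrix.add_apply]
    by_cases h1 : r = m
    · by_cases h2 : s = j
      · rw [h1, h2, Pi.single_eq_same, one_mul, Matrix.single_apply_same,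
          Matrix.single_apply_of_ne m i _ m j (fun hh => hij hh.2), add_zero]
        simp only [hβs, Pi.smul_apply, smul_eq_mul, hs0j]
      · by_cases h3 : s = i
        · rw [h1, h3, Pi.single_eq_same, one_mul,
            Matrix.single_apply_of_ne m j _ m i (fun hh => hij hh.2.symm),
            Matrix.single_apply_same, zero_add]
          simp only [hβs, Pi.smul_apply, smul_eq_mul, hs0i]
          ring
        · rw [h1, Pi.single_eq_same, one_mul,
            Matrix.single_apply_of_ne m j _ m s (fun hh => h2 hh.2.symm),
            Matrix.single_apply_of_ne m i _ m s (fun hh => h3 hh.2.symm), add_zero]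
          simp only [hβs, Pi.smul_apply, smul_eq_mul, hs0other s h2 h3]
          ring
    · rw [Pi.single_apply, if_neg h1, zero_mul,
        Matrix.single_apply_of_ne m j _ r s (fun hh => h1 hh.1.symm),
        Matrix.single_apply_of_ne m i _ r s (fun hh => h1 hh.1.symm), add_zero]
  have hQ_decomp : rk1 (Pi.single m 1) βs = Q2 * Q1 := by
    apply Subtype.ext
    show _ = (Q2.val) * (Q1.val)
    rw [rk1_val hβs_dot_single, hQ2, hQ1, elemTransv_val, elemTransv_val]
    have hmul0 : Matrix.single m j (β * u i) * Matrix.single m i (-(β * u j)) = 0 :=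
      Matrix.single_mul_single_of_ne _ _ _ _ (Ne.symm hmj) _
    rw [mul_add, add_mul, add_mul, mul_one, one_mul, mul_one, hmul0, add_zero, hvecβs]
    abel
  -- the commutator decomposition of rk1 u'' βs
  have Id5 : rk1 u'' βs = rk1 u'' (Pi.single m 1) * rk1 (Pi.single m 1) βs *
      (rk1 u'' (Pi.single m 1))⁻¹ * (rk1 (Pi.single m 1) βs)⁻¹ :=
    rk1_comm_decomp hu''m hβsm hβsu''
  -- memberships
  have hP2E : P2 ∈ Esub n (Set.univ : Set R) := by rw [hP2]; exact elemTransv_mem_E _ _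
  have hQ2E : Q2 ∈ Esub n (Set.univ : Set R) := by rw [hQ2]; exact elemTransv_mem_E _ _
  have hP1N : P1 ∈ relE n a := by
    rw [hP1]
    refine colN a u3 hu3m fun k => ?_
    by_cases h1 : k = i
    · rw [hu3, h1]
      simp only [Function.update_apply, if_pos rfl]
      exact a.zero_mem
    · rw [hu3]
      simp only [Function.update_apply, if_neg h1]
      rw [hu'']
      simp only [Function.update_apply]
      by_cases h2 : k = m
      · rw [if_pos h2]; exact a.zero_mem
      · rw [if_neg h2]; exact mem_a _ (by rw [hmu k, if_neg h1])
  have hQ1N : Q1 ∈ relE n a := by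
    rw [hQ1]
    exact elemTransv_mem_relE a _ (neg_mem (Ideal.mul_mem_left _ _
      (mem_a _ (by rw [hmu j, if_neg fun h => hij h.symm]))))
  -- the K element
  set e : SL n R := elemTransv i j hij t with he
  have heinv : elemTransv i j hij (-t) = e⁻¹ := by rw [he, elemTransv_inv]
  have hK : ⁅P2, Q2⁆ = elemTransv i j hij (u i * (β * u i)) := by
    rw [hP2, hQ2]; exact elemTransv_comm (Ne.symm hmi) hmj hij _ _
  have hmkβ : mk β = mk t * (μ' * μ') := by
    rw [hβ, hc]
    show mk (t * (v j * w i)) = _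
    rw [_root_.map_mul, _root_.map_mul, hmv j, hmw i, if_pos rfl, if_pos rfl]
  have hKparam : u i * (β * u i) + -t ∈ a := by
    apply mem_a
    rw [_root_.map_add, _root_.map_neg, _root_.map_mul, _root_.map_mul, hmu i,
      if_pos rfl, hmkβ]
    linear_combination (mk t) * (μ * μ' + 1) * hμμ'
  have hKN : ⁅P2, Q2⁆ * e⁻¹ ∈ relE n a := by
    rw [hK, ← heinv, elemTransv_mul]
    exact elemTransv_mem_relE a _ hKparam
  -- the shuffle
  have hHN : rk1 u'' βs * e⁻¹ ∈ relE n a := by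
    have hfree : rk1 u'' (Pi.single m 1) * rk1 (Pi.single m 1) βs *
        (rk1 u'' (Pi.single m 1))⁻¹ * (rk1 (Pi.single m 1) βs)⁻¹ * e⁻¹ =
        (P2 * P1 * P2⁻¹) * ((P2 * Q2) * Q1 * (P2 * Q2)⁻¹) *
        ((P2 * Q2) * P1⁻¹ * (P2 * Q2)⁻¹) *
        ((P2 * Q2 * P2⁻¹) * Q1⁻¹ * (P2 * Q2 * P2⁻¹)⁻¹) *
        (P2 * Q2 * P2⁻¹ * Q2⁻¹ * e⁻¹) := by
      rw [hP_decomp, hQ_decomp]; group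
    rw [Id5, hfree]
    refine Subgroup.mul_mem _ (Subgroup.mul_mem _ (Subgroup.mul_mem _
      (Subgroup.mul_mem _ ?_ ?_) ?_) ?_) ?_
    · exact relE_conj a hP2E hP1N
    · exact relE_conj a (Subgroup.mul_mem _ hP2E hQ2E) hQ1N
    · exact relE_conj a (Subgroup.mul_mem _ hP2E hQ2E) (Subgroup.inv_mem _ hP1N)
    · exact relE_conj a (Subgroup.mul_mem _ (Subgroup.mul_mem _ hP2E hQ2E)
        (Subgroup.inv_mem _ hP2E)) (Subgroup.inv_mem _ hQ1N)
    · have hcd : P2 * Q2 * P2⁻¹ * Q2⁻¹ * e⁻¹ = ⁅P2, Q2⁆ * e⁻¹ := by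
        rw [commutatorElement_def]
      rw [hcd]; exact hKN
  have heE : e ∈ Esub n (Set.univ : Set R) := by rw [he]; exact elemTransv_mem_E _ _
  have hGN : rk1 u βs * e⁻¹ ∈ relE n a := by
    have hid : rk1 u βs * e⁻¹ = (rk1 u'' βs * e⁻¹) * (e * rk1 q βs * e⁻¹) := by
      rw [Id3]; group
    rw [hid]
    exact Subgroup.mul_mem _ hHN (relE_conj a heE memB)
  rw [Id1, heinv, Id2, mul_assoc]
  exact Subgroup.mul_mem _ mem1 hGN

end Core


/-- The four possible definitions of the full congruence subgroup coincide:
for `n ≥ 3` and an ideal `𝔞 ⊴ R`, the group `C(n,R,𝔞)` equals each of the sets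
`{g : ∀ x ∈ E(n,R), [g,x] ∈ E(n,R,𝔞)}`, `{g : ∀ x ∈ E(n,R), [g,x] ∈ C(n,R,𝔞)}`
and `{g : ∀ x ∈ SL(n,R), [g,x] ∈ C(n,R,𝔞)}`. -/
theorem Ccong_eq_transporter_descriptions
    {R : Type*} [CommRing R] (n : ℕ) (hn : 3 ≤ n) (a : Ideal R) :
    ((Ccong n a : Set (SL n R)) =
        { g : SL n R | ∀ x ∈ Esub n (Set.univ : Set R), ⁅g, x⁆ ∈ relE n a }) ∧
    ((Ccong n a : Set (SL n R)) =
        { g : SL n R | ∀ x ∈ Esub n (Set.univ : Set R), ⁅g, x⁆ ∈ Ccong n a }) ∧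
    ((Ccong n a : Set (SL n R)) =
        { g : SL n R | ∀ x : SL n R, ⁅g, x⁆ ∈ Ccong n a }) := by
  have h12 : ∀ g ∈ Ccong n a, ∀ x ∈ Esub n (Set.univ : Set R), ⁅g, x⁆ ∈ relE n a :=
    fun g hg => comm_mem_relE_of_gen a (fun i j hij t => core a hn hg i j hij t)
  refine ⟨?_, ?_, ?_⟩ <;> ext g <;> simp only [Set.mem_setOf_eq, SetLike.mem_coe]
  · exact ⟨fun hg => h12 g hg,
      fun h => subset31 a hn (fun x hx => relE_le_Ccong a (h x hx))⟩
  · exact ⟨fun hg x hx => relE_le_Ccong a (h12 g hg x hx), fun h => subset31 a hn h⟩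
  · exact ⟨fun hg => subset14 a hg, fun h => subset31 a hn (fun x _ => h x)⟩
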